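/- Let λ ∈ C ∩ X and let w ∈ W_p be such that w·λ ∈ C_I ∩ X₊ and d(w·λ) > 0. Then there exists β ∈ Φ⁺ ∖ ℤI such that n_β(w·λ) ≠ 0 and the hyperplane H_{β, n_β(w·λ)} contains a wall of the alcove containing w·λ. -/

import Mathlib

noncomputable section

/-- The real vector space `X ⊗ ℝ`, where `X` is a free abelian group of rank `r`. -/
abbrev Vr (r : ℕ) := Fin r → ℝ

/-- The lattice `X` (identified with `ℤ^r`); its dual lattice `Y` is identified with
the same coordinate lattice via the standard perfect pairing. -/
abbrev Lr (r : ℕ) := Fin r → ℤ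

/-- The embedding `X → X ⊗ ℝ`. -/
def toV {r : ℕ} (x : Lr r) : Vr r := fun i => (x i : ℝ)

/-- The perfect pairing `⟨·,·⟩ : X × Y → ℤ`. -/
def pairZ {r : ℕ} (x y : Lr r) : ℤ := ∑ i, x i * y i

/-- The real extension of the pairing to `(X ⊗ ℝ) × Y → ℝ`. -/
def pairR {r : ℕ} (v : Vr r) (y : Lr r) : ℝ := ∑ i, v i * (y i : ℝ)

/-- The subgroup `ℤI` of `X` generated by a subset `I ⊆ X`. -/
def ZI {r : ℕ} (I : Finset (Lr r)) : AddSubgroup (Lr r) :=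
  AddSubgroup.closure (I : Set (Lr r))

/-- The data of a reduced crystallographic root system `Φ ⊆ X` with a fixed positive
system `Φ⁺`, simple roots `Φ_s`, coroots `α∨ ∈ Y`, a prime `p`, and the half-sum
`ρ ∈ X` of the positive roots. -/
structure ARDatum (r : ℕ) where
  Φ : Finset (Lr r)
  pos : Finset (Lr r)
  simples : Finset (Lr r)
  coroot : Lr r → Lr r
  p : ℕ
  ρ : Lr r
  hp : p.Prime
  root_ne_zero : ∀ α ∈ Φ, α ≠ 0
  pos_sub : pos ⊆ Φ
  simples_sub : simples ⊆ pos
  pos_or_neg : ∀ α ∈ Φ, α ∈ pos ∨ -α ∈ pos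
  not_pos_and_neg : ∀ α ∈ pos, -α ∉ pos
  neg_mem : ∀ α ∈ Φ, -α ∈ Φ
  root_coroot_two : ∀ α ∈ Φ, pairZ α (coroot α) = 2
  reflect_root_mem : ∀ α ∈ Φ, ∀ β ∈ Φ, β - pairZ β (coroot α) • α ∈ Φ
  reflect_coroot_mem : ∀ α ∈ Φ, ∀ β ∈ Φ,
    coroot β - pairZ α (coroot β) • coroot α ∈ coroot '' (Φ : Set (Lr r))
  reduced : ∀ α ∈ Φ, ∀ c : ℤ, c • α ∈ Φ → c = 1 ∨ c = -1
  pos_sum_simples : ∀ β ∈ pos, ∃ c : Lr r → ℕ, β = ∑ α ∈ simples, (c α : ℤ) • α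
  two_rho : (2 : ℤ) • ρ = ∑ α ∈ pos, α

namespace ARDatum

/-- The group of affine transformations of `X ⊗ ℝ`. -/
abbrev G (r : ℕ) := (Vr r) ≃ᵃ[ℝ] (Vr r)

variable {r : ℕ} (D : ARDatum r)

/-- `g` is the affine reflection `s_{α,mp} : v ↦ v − (⟨v,α∨⟩ − mp)·α`. -/
def IsRefl (α : Lr r) (m : ℤ) (g : G r) : Prop :=
  ∀ v : Vr r, g v = v - (pairR v (D.coroot α) - (m : ℝ) * (D.p : ℝ)) • toV α

/-- `g` is the linear reflection `s_α : v ↦ v − ⟨v,α∨⟩·α`. -/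
def IsLinRefl (α : Lr r) (g : G r) : Prop := D.IsRefl α 0 g

/-- `g` is the translation `t_{α,mp} : v ↦ v + mp·α`. -/
def IsTransl (α : Lr r) (m : ℤ) (g : G r) : Prop :=
  ∀ v : Vr r, g v = v + ((m : ℝ) * (D.p : ℝ)) • toV α

/-- The affine Weyl group `W_p`, generated by the `s_α` and the `t_{α,mp}`
for `α ∈ Φ⁺`, `m ∈ ℤ`. -/
def Wp : Subgroup (G r) :=
  Subgroup.closure ({g | ∃ α ∈ D.pos, D.IsLinRefl α g} ∪
    {g | ∃ α ∈ D.pos, ∃ m : ℤ, D.IsTransl α m g})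

/-- The finite Weyl group `W`, generated by the `s_α` for `α ∈ Φ⁺`. -/
def W : Subgroup (G r) :=
  Subgroup.closure {g | ∃ α ∈ D.pos, D.IsLinRefl α g}

/-- The subgroup `W_{I,p}` generated by the `s_α` and `t_{α,mp}` for `α ∈ I`. -/
def WIp (I : Finset (Lr r)) : Subgroup (G r) :=
  Subgroup.closure ({g | ∃ α ∈ I, D.IsLinRefl α g} ∪
    {g | ∃ α ∈ I, ∃ m : ℤ, D.IsTransl α m g})

/-- The subgroup `W_I` of `W` generated by the `s_α` for `α ∈ I`. -/
def WI (I : Finset (Lr r)) : Subgroup (G r) :=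
  Subgroup.closure {g | ∃ α ∈ I, D.IsLinRefl α g}

/-- `g` is a reflection (the reflections of `W_p` are exactly the `s_{α,mp}`). -/
def IsReflection (g : G r) : Prop := ∃ α ∈ D.pos, ∃ m : ℤ, D.IsRefl α m g

/-- The dot action `w·v := w(v+ρ) − ρ`. -/
def dot (g : G r) (v : Vr r) : Vr r := g (v + toV D.ρ) - toV D.ρ

/-- The hyperplane `H_{α,n} = {v : ⟨v+ρ,α∨⟩ = np}`. -/
def Hyp (α : Lr r) (n : ℤ) : Set (Vr r) :=
  {v | pairR (v + toV D.ρ) (D.coroot α) = (n : ℝ) * (D.p : ℝ)}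

/-- The complement of the union of all the hyperplanes `H_{α,n}`. -/
def Reg : Set (Vr r) :=
  {v | ∀ α ∈ D.pos, ∀ n : ℤ, pairR (v + toV D.ρ) (D.coroot α) ≠ (n : ℝ) * (D.p : ℝ)}

/-- The alcove containing `v` (the connected component of `v` in the complement of
the hyperplanes). -/
def alcoveOf (v : Vr r) : Set (Vr r) := connectedComponentIn D.Reg v

/-- `H_{α,n}` contains a wall of `A`, i.e. the interior of `closure A ∩ H_{α,n}`
inside the hyperplane `H_{α,n}` is nonempty. -/
def HasWall (A : Set (Vr r)) (α : Lr r) (n : ℤ) : Prop :=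
  ∃ x ∈ closure A ∩ D.Hyp α n, ∃ ε > 0,
    ∀ y ∈ D.Hyp α n, dist y x < ε → y ∈ closure A

/-- The fundamental alcove `C`. -/
def FundC : Set (Vr r) :=
  {v | ∀ α ∈ D.pos, 0 < pairR (v + toV D.ρ) (D.coroot α) ∧
    pairR (v + toV D.ρ) (D.coroot α) < (D.p : ℝ)}

/-- The closure `C̄` of the fundamental alcove. -/
def FundCBar : Set (Vr r) :=
  {v | ∀ α ∈ D.pos, 0 ≤ pairR (v + toV D.ρ) (D.coroot α) ∧
    pairR (v + toV D.ρ) (D.coroot α) ≤ (D.p : ℝ)}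

/-- The region `C_I`. -/
def CI (I : Finset (Lr r)) : Set (Vr r) :=
  {v | ∀ α ∈ D.pos, α ∈ ZI I → 0 < pairR (v + toV D.ρ) (D.coroot α) ∧
    pairR (v + toV D.ρ) (D.coroot α) < (D.p : ℝ)}

/-- The region `C̄_I`. -/
def CIBar (I : Finset (Lr r)) : Set (Vr r) :=
  {v | ∀ α ∈ D.pos, α ∈ ZI I → 0 ≤ pairR (v + toV D.ρ) (D.coroot α) ∧
    pairR (v + toV D.ρ) (D.coroot α) ≤ (D.p : ℝ)}

/-- `S_p`: the reflections of `W_p` in the walls of the fundamental alcove `C`. -/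
def Sp : Set (G r) :=
  {g | g ∈ D.Wp ∧ ∃ α ∈ D.pos, ∃ m : ℤ, D.IsRefl α m g ∧ D.HasWall D.FundC α m}

/-- One step of the order `⪯` (`↑`): `s_{α,mp}·u ⪯ u` whenever `⟨u+ρ,α∨⟩ ≥ mp`. -/
def UpStep (v u : Vr r) : Prop :=
  ∃ α ∈ D.pos, ∃ m : ℤ, (m : ℝ) * (D.p : ℝ) ≤ pairR (u + toV D.ρ) (D.coroot α) ∧
    v = u - (pairR (u + toV D.ρ) (D.coroot α) - (m : ℝ) * (D.p : ℝ)) • toV α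

/-- The order `⪯` (`↑`): the reflexive-transitive closure of `UpStep`. -/
def Up : Vr r → Vr r → Prop := Relation.ReflTransGen D.UpStep

/-- The strict order `≺`. -/
def Ups (v u : Vr r) : Prop := D.Up v u ∧ v ≠ u

/-- The order `≤`: `v ≤ u` iff `u − v` is a `ℤ≥0`-combination of the simple roots. -/
def Le (v u : Vr r) : Prop :=
  ∃ c : Lr r → ℕ, u - v = ∑ α ∈ D.simples, (c α : ℝ) • toV α

/-- The strict order `<`. -/
def Lt (v u : Vr r) : Prop := D.Le v u ∧ v ≠ u

/-- `X₊ = {ν ∈ X : ⟨ν+ρ,α∨⟩ ≥ 0 for all α ∈ Φ⁺}`, viewed inside `X ⊗ ℝ`. -/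
def XplusR : Set (Vr r) :=
  {v | (∃ ν : Lr r, toV ν = v) ∧ ∀ α ∈ D.pos, 0 ≤ pairR (v + toV D.ρ) (D.coroot α)}

/-- `n_α(v)`: the unique integer with `n_α(v)·p < ⟨v+ρ,α∨⟩ < (n_α(v)+1)·p`
(for `v` on none of the hyperplanes), realised as a floor. -/
def nfl (v : Vr r) (α : Lr r) : ℤ := ⌊pairR (v + toV D.ρ) (D.coroot α) / (D.p : ℝ)⌋

/-- `d(v) = ∑_{α ∈ Φ⁺} n_α(v)`. -/
def dfn (v : Vr r) : ℤ := ∑ α ∈ D.pos, D.nfl v α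

/-- The sublattice `pX` of `X`. -/
def pLat : AddSubgroup (Lr r) where
  carrier := {x | ∃ y : Lr r, x = (D.p : ℤ) • y}
  zero_mem' := ⟨0, by simp⟩
  add_mem' := by rintro a b ⟨y, rfl⟩ ⟨z, rfl⟩; exact ⟨y + z, (smul_add _ _ _).symm⟩
  neg_mem' := by rintro a ⟨y, rfl⟩; exact ⟨-y, (smul_neg _ _).symm⟩

/-- The orbit of `ν + pX` under the dot action of `W_I` on `X/pX`. -/
def dotOrbit (I : Finset (Lr r)) (ν : Lr r) : Set (Lr r ⧸ D.pLat) :=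
  {c | ∃ w ∈ D.WI I, ∃ ν' : Lr r, toV ν' = D.dot w (toV ν) ∧
    c = QuotientAddGroup.mk ν'}

end ARDatum


section StmtAux

open Finset Filter

variable {r : ℕ}

lemma pairR_add_left (u v : Vr r) (y : Lr r) : pairR (u + v) y = pairR u y + pairR v y := by
  simp only [pairR, Pi.add_apply]
  rw [← Finset.sum_add_distrib]
  exact Finset.sum_congr rfl fun i _ => by ring

lemma pairR_sub_left (u v : Vr r) (y : Lr r) : pairR (u - v) y = pairR u y - pairR v y := by
  simp only [pairR, Pi.sub_apply]
  rw [← Finset.sum_sub_distrib]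
  exact Finset.sum_congr rfl fun i _ => by ring

lemma pairR_smul_left (s : ℝ) (v : Vr r) (y : Lr r) : pairR (s • v) y = s * pairR v y := by
  simp only [pairR, Pi.smul_apply, smul_eq_mul, Finset.mul_sum]
  exact Finset.sum_congr rfl fun i _ => by ring

lemma pairR_toV (x y : Lr r) : pairR (toV x) y = (pairZ x y : ℝ) := by
  simp only [pairR, pairZ, toV]
  push_cast
  rfl

lemma pairR_neg_right (v : Vr r) (y : Lr r) : pairR v (-y) = - pairR v y := by
  simp only [pairR, Pi.neg_apply, Int.cast_neg, mul_neg]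
  rw [Finset.sum_neg_distrib]

lemma pairR_sub_zsmul_right (v : Vr r) (y z : Lr r) (k : ℤ) :
    pairR v (y - k • z) = pairR v y - (k : ℝ) * pairR v z := by
  simp only [pairR, Pi.sub_apply, Pi.smul_apply, smul_eq_mul, Int.cast_sub, Int.cast_mul,
    Finset.mul_sum]
  rw [← Finset.sum_sub_distrib]
  exact Finset.sum_congr rfl fun i _ => by ring

lemma pairZ_add_left (x y z : Lr r) : pairZ (x + y) z = pairZ x z + pairZ y z := by
  simp only [pairZ, Pi.add_apply]
  rw [← Finset.sum_add_distrib]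
  exact Finset.sum_congr rfl fun i _ => by ring

lemma pairZ_sub_left (x y z : Lr r) : pairZ (x - y) z = pairZ x z - pairZ y z := by
  simp only [pairZ, Pi.sub_apply]
  rw [← Finset.sum_sub_distrib]
  exact Finset.sum_congr rfl fun i _ => by ring

lemma pairZ_zsmul_left (x y : Lr r) (k : ℤ) : pairZ (k • x) y = k * pairZ x y := by
  simp only [pairZ, Pi.smul_apply, smul_eq_mul, Finset.mul_sum]
  exact Finset.sum_congr rfl fun i _ => by ring

lemma pairZ_neg_left (x y : Lr r) : pairZ (-x) y = - pairZ x y := by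
  simp only [pairZ, Pi.neg_apply, neg_mul]
  rw [Finset.sum_neg_distrib]

lemma pairZ_add_right (x y z : Lr r) : pairZ x (y + z) = pairZ x y + pairZ x z := by
  simp only [pairZ, Pi.add_apply]
  rw [← Finset.sum_add_distrib]
  exact Finset.sum_congr rfl fun i _ => by ring

lemma pairZ_zsmul_right (x y : Lr r) (k : ℤ) : pairZ x (k • y) = k * pairZ x y := by
  simp only [pairZ, Pi.smul_apply, smul_eq_mul, Finset.mul_sum]
  exact Finset.sum_congr rfl fun i _ => by ring

lemma pairR_line (mu c rv : Vr r) (t : ℝ) (y : Lr r) :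
    pairR ((mu + t • (c - mu)) + rv) y
      = pairR (mu + rv) y - t * (pairR (mu + rv) y - pairR (c + rv) y) := by
  simp only [pairR, Pi.add_apply, Pi.smul_apply, Pi.sub_apply, smul_eq_mul]
  rw [show (∑ i, (mu i + t * (c i - mu i) + rv i) * (y i : ℝ))
      = ∑ i, ((mu i + rv i) * (y i:ℝ) - t * ((mu i + rv i) * (y i:ℝ) - (c i + rv i) * (y i:ℝ)))
      from Finset.sum_congr rfl fun i _ => by ring]
  rw [Finset.sum_sub_distrib, ← Finset.mul_sum, Finset.sum_sub_distrib]

lemma pairR_shift (y0 v rv : Vr r) (t : ℝ) (z : Lr r) :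
    pairR ((y0 + t • v) + rv) z = pairR (y0 + rv) z + t * pairR v z := by
  simp only [pairR, Pi.add_apply, Pi.smul_apply, smul_eq_mul]
  rw [show (∑ i, (y0 i + t * v i + rv i) * (z i : ℝ))
      = ∑ i, ((y0 i + rv i) * (z i:ℝ) + t * (v i * (z i:ℝ)))
      from Finset.sum_congr rfl fun i _ => by ring]
  rw [Finset.sum_add_distrib, ← Finset.mul_sum]

lemma continuous_pairR_add (w0 : Vr r) (y : Lr r) :
    Continuous fun v : Vr r => pairR (v + w0) y := by
  unfold pairR
  apply continuous_finset_sum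
  intro i _
  exact ((continuous_apply i).add continuous_const).mul continuous_const

lemma comb_lt {a b lo t : ℝ} (ha : lo < a) (hb : lo < b) (ht0 : 0 ≤ t) (ht1 : t ≤ 1) :
    lo < a - t * (a - b) := by
  rcases eq_or_lt_of_le ht1 with h | h
  · nlinarith [h]
  · nlinarith [mul_pos (sub_pos.2 h) (sub_pos.2 ha), mul_nonneg ht0 (sub_pos.2 hb).le]

lemma comb_gt {a b hi t : ℝ} (ha : a < hi) (hb : b < hi) (ht0 : 0 ≤ t) (ht1 : t ≤ 1) :
    a - t * (a - b) < hi := by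
  rcases eq_or_lt_of_le ht1 with h | h
  · nlinarith [h]
  · nlinarith [mul_pos (sub_pos.2 h) (sub_pos.2 ha), mul_nonneg ht0 (sub_pos.2 hb).le]

lemma finset_exists_pos {ι : Type*} (s : Finset ι) (f : ι → ℝ) :
    (∀ i ∈ s, 0 < f i) → ∃ ε : ℝ, 0 < ε ∧ ∀ i ∈ s, ε ≤ f i := by
  classical
  induction s using Finset.induction_on with
  | empty => exact fun _ => ⟨1, one_pos, by simp⟩
  | @insert a s hanotin ih =>
    intro hf
    obtain ⟨ε, hε, hle⟩ := ih fun i hi => hf i (Finset.mem_insert_of_mem hi)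
    refine ⟨min ε (f a), lt_min hε (hf a (Finset.mem_insert_self a s)), ?_⟩
    intro i hi
    rcases Finset.mem_insert.mp hi with rfl | hi'
    · exact min_le_right _ _
    · exact le_trans (min_le_left _ _) (hle i hi')

lemma mem_closure_of_ray {B : Set (Vr r)} {q : Vr r} (v : Vr r)
    (h : ∀ s : ℝ, 0 < s → s ≤ 1 → q + s • v ∈ B) : q ∈ closure B := by
  have h0 : Tendsto (fun m : ℕ => (1 / ((m:ℝ) + 1) : ℝ)) atTop (nhds 0) :=
    tendsto_one_div_add_atTop_nhds_zero_nat
  have hφ : Continuous fun t : ℝ => q + t • v :=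
    continuous_const.add (continuous_id.smul continuous_const)
  have hten : Tendsto (fun m : ℕ => q + (1 / ((m:ℝ) + 1) : ℝ) • v) atTop (nhds q) := by
    have := (hφ.continuousAt (x := 0)).tendsto.comp h0
    simpa [Function.comp_def] using this
  refine mem_closure_of_tendsto hten (Filter.Eventually.of_forall fun m => h _ ?_ ?_)
  · positivity
  · rw [div_le_one (by positivity)]
    linarith [Nat.cast_nonneg (α := ℝ) m]

lemma div_bound_helper {K d : ℝ} (hK : 0 ≤ K) (hd : 0 < d) : K * (d / (2*(K+1))) < d / 2 := by
  rw [mul_div_assoc', div_lt_div_iff₀ (by linarith) (by norm_num)]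
  nlinarith

lemma exists_avoid {ι : Type*} (fs : Finset ι) (w : ι → Vr r) (e : ι → ℝ) :
    (∀ i ∈ fs, w i ≠ 0) → ∀ (U : Set (Vr r)), IsOpen U → U.Nonempty →
      ∃ c ∈ U, ∀ i ∈ fs, (∑ j, c j * w i j) + e i ≠ 0 := by
  classical
  induction fs using Finset.induction_on with
  | empty =>
    intro _ U _ hUne
    obtain ⟨c, hc⟩ := hUne
    exact ⟨c, hc, by simp⟩
  | @insert a s hanotin ih =>
    intro hw U hU hUne
    have hwa : w a ≠ 0 := hw a (Finset.mem_insert_self a s)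
    set g : Vr r → ℝ := fun c => (∑ j, c j * w a j) + e a with hg
    have hgc : Continuous g := by
      apply Continuous.add _ continuous_const
      exact continuous_finset_sum _ fun j _ => (continuous_apply j).mul continuous_const
    have hU' : IsOpen (U ∩ {c | g c ≠ 0}) :=
      hU.inter (isOpen_compl_singleton.preimage hgc)
    have hne' : (U ∩ {c | g c ≠ 0}).Nonempty := by
      by_contra hcon
      rw [Set.not_nonempty_iff_eq_empty] at hcon
      have hzero : ∀ c ∈ U, g c = 0 := by
        intro c hc
        by_contra h0
        have : c ∈ U ∩ {c | g c ≠ 0} := ⟨hc, h0⟩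
        rw [hcon] at this
        exact this
      obtain ⟨c₀, hc₀⟩ := hUne
      apply hwa
      funext j
      have hφ : Continuous fun t : ℝ => c₀ + t • (Pi.single j 1 : Vr r) :=
        continuous_const.add (continuous_id.smul continuous_const)
      have h0mem : (fun t : ℝ => c₀ + t • (Pi.single j 1 : Vr r)) 0 ∈ U := by simpa using hc₀
      have hpre : IsOpen ((fun t : ℝ => c₀ + t • (Pi.single j 1 : Vr r)) ⁻¹' U) := hU.preimage hφ
      obtain ⟨ε, hε, hball⟩ := Metric.isOpen_iff.mp hpre 0 h0mem
      have hmem : c₀ + (ε/2) • (Pi.single j 1 : Vr r) ∈ U := by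
        apply hball
        rw [Metric.mem_ball, Real.dist_eq]
        rw [sub_zero, abs_of_pos (by linarith)]
        linarith
      have h1 := hzero _ hmem
      have h2 := hzero _ hc₀
      have hsum : (∑ j', (c₀ + (ε/2) • (Pi.single j 1 : Vr r)) j' * w a j')
          = (∑ j', c₀ j' * w a j') + (ε/2) * w a j := by
        rw [show (∑ j', (c₀ + (ε/2) • (Pi.single j 1 : Vr r)) j' * w a j')
            = ∑ j', (c₀ j' * w a j' + (ε/2) * ((Pi.single j 1 : Vr r) j' * w a j'))
            from Finset.sum_congr rfl fun j' _ => by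
              simp only [Pi.add_apply, Pi.smul_apply, smul_eq_mul]; ring]
        rw [Finset.sum_add_distrib, ← Finset.mul_sum]
        congr 1
        rw [show (∑ j', (Pi.single j 1 : Vr r) j' * w a j') = w a j from by
          rw [Finset.sum_eq_single j]
          · simp
          · intro b _ hb; simp [Pi.single_apply, hb]
          · intro hj; exact absurd (Finset.mem_univ j) hj]
      have hwj : (ε/2) * w a j = 0 := by
        simp only [hg] at h1 h2
        rw [hsum] at h1
        linarith
      have : w a j = 0 := by
        have hne2 : (ε/2 : ℝ) ≠ 0 := by positivity
        exact (mul_eq_zero.mp hwj).resolve_left hne2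
      simpa using this
    obtain ⟨c, hc, hcs⟩ := ih (fun i hi => hw i (Finset.mem_insert_of_mem hi)) _ hU' hne'
    refine ⟨c, hc.1, ?_⟩
    intro i hi
    rcases Finset.mem_insert.mp hi with rfl | h
    · exact hc.2
    · exact hcs i h

namespace ARDatum

variable {r : ℕ} (D : ARDatum r)

lemma coroot_neg {δ : Lr r} (hδ : δ ∈ D.Φ) : D.coroot (-δ) = - D.coroot δ := by
  have hnδ : -δ ∈ D.Φ := D.neg_mem δ hδ
  set c := D.coroot (-δ) with hc
  set d := D.coroot δ with hd
  have hdd : pairZ δ d = 2 := D.root_coroot_two δ hδ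
  have hcc : pairZ δ c = -2 := by
    have h2 := D.root_coroot_two (-δ) hnδ
    rw [pairZ_neg_left, ← hc] at h2
    omega
  by_contra hne
  have hcd : c + d ≠ 0 := fun h0 => hne (eq_neg_of_add_eq_zero_left h0)
  obtain ⟨i, hi⟩ : ∃ i, (c + d) i ≠ 0 := by
    by_contra hall
    push_neg at hall
    exact hcd (funext hall)
  have key : ∀ m : ℕ, ∃ γ ∈ D.Φ, D.coroot γ = d + (2 * (m:ℤ)) • (c + d) := by
    intro m
    induction m with
    | zero => exact ⟨δ, hδ, by simp [hd]⟩
    | succ m ihm =>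
      obtain ⟨γ, hγ, hγeq⟩ := ihm
      have hpγ : pairZ δ (D.coroot γ) = 2 := by
        rw [hγeq, pairZ_add_right, pairZ_zsmul_right, pairZ_add_right, hdd, hcc]
        ring
      obtain ⟨γ', hγ'mem, hγ'eq⟩ := D.reflect_coroot_mem (-δ) hnδ γ hγ
      rw [← hc] at hγ'eq
      have hγ'mem' : γ' ∈ D.Φ := hγ'mem
      have hγ'eq2 : D.coroot γ' = D.coroot γ + (2:ℤ) • c := by
        rw [hγ'eq, pairZ_neg_left, hpγ]
        module
      have hpγ' : pairZ δ (D.coroot γ') = -2 := by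
        rw [hγ'eq2, pairZ_add_right, pairZ_zsmul_right, hpγ, hcc]
        ring
      obtain ⟨γ'', hγ''mem, hγ''eq⟩ := D.reflect_coroot_mem δ hδ γ' hγ'mem'
      rw [← hd] at hγ''eq
      refine ⟨γ'', hγ''mem, ?_⟩
      rw [hγ''eq, hpγ', hγ'eq2, hγeq]
      push_cast
      module
  have hinj : Function.Injective fun m : ℕ => d + (2 * (m:ℤ)) • (c + d) := by
    intro a b hab
    have h := congrFun hab i
    simp only [Pi.add_apply, Pi.smul_apply, smul_eq_mul] at h
    have h2 : (2 * (a:ℤ)) * (c + d) i = (2 * (b:ℤ)) * (c + d) i := by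
      have hcdi : (c + d) i = c i + d i := rfl
      rw [hcdi] at hi ⊢
      omega
    have := mul_right_cancel₀ hi h2
    omega
  have hsub : ∀ m : ℕ, d + (2 * (m:ℤ)) • (c + d) ∈ (D.coroot '' (D.Φ : Set (Lr r))) := by
    intro m
    obtain ⟨γ, hγ, he⟩ := key m
    exact ⟨γ, hγ, he⟩
  exact Set.infinite_of_injective_forall_mem hinj hsub (D.Φ.finite_toSet.image D.coroot)

lemma root_eq_of_prop {α β : Lr r} (hα : α ∈ D.Φ) (hβ : β ∈ D.Φ) {A B : ℝ}
    (hA : 0 < A) (hB : 0 < B)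
    (h : ∀ i, A * (D.coroot β i : ℝ) = B * (D.coroot α i : ℝ)) : α = β := by
  obtain ⟨m, hm⟩ : ∃ m, m = pairZ α (D.coroot β) := ⟨_, rfl⟩
  obtain ⟨m', hm'⟩ : ∃ m', m' = pairZ β (D.coroot α) := ⟨_, rfl⟩
  have e1 : A * (m : ℝ) = 2 * B := by
    have he : A * (pairZ α (D.coroot β) : ℝ) = B * (pairZ α (D.coroot α) : ℝ) := by
      push_cast [pairZ]
      rw [Finset.mul_sum, Finset.mul_sum]
      exact Finset.sum_congr rfl fun i _ => by rw [mul_left_comm, h i, mul_left_comm]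
    rw [D.root_coroot_two α hα] at he
    push_cast at he
    rw [← hm] at he
    linarith
  have e2 : 2 * A = B * (m' : ℝ) := by
    have he : A * (pairZ β (D.coroot β) : ℝ) = B * (pairZ β (D.coroot α) : ℝ) := by
      push_cast [pairZ]
      rw [Finset.mul_sum, Finset.mul_sum]
      exact Finset.sum_congr rfl fun i _ => by rw [mul_left_comm, h i, mul_left_comm]
    rw [D.root_coroot_two β hβ] at he
    push_cast at he
    rw [← hm'] at he
    linarith
  have hm1 : 1 ≤ m := by
    have hr : (0:ℝ) < (m:ℝ) := by nlinarith
    have : (0:ℤ) < m := by exact_mod_cast hr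
    omega
  have hm'1 : 1 ≤ m' := by
    have hr : (0:ℝ) < (m':ℝ) := by nlinarith
    have : (0:ℤ) < m' := by exact_mod_cast hr
    omega
  have hmm' : m * m' = 4 := by
    have hr : (m:ℝ) * (m':ℝ) = 4 := by
      have hAB : A * ((m:ℝ) * (m':ℝ)) = A * 4 := by
        linear_combination (m':ℝ) * e1 - 2 * e2
      have := mul_left_cancel₀ hA.ne' hAB
      linarith
    exact_mod_cast hr
  obtain ⟨u, hu⟩ : ∃ u, u = m • β - (2:ℤ) • α := ⟨_, rfl⟩
  have huα : pairZ u (D.coroot α) = 0 := by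
    rw [hu, pairZ_sub_left, pairZ_zsmul_left, pairZ_zsmul_left, D.root_coroot_two α hα, ← hm']
    rw [hmm']
    norm_num
  have huβ : pairZ u (D.coroot β) = 0 := by
    rw [hu, pairZ_sub_left, pairZ_zsmul_left, pairZ_zsmul_left, D.root_coroot_two β hβ, ← hm]
    ring
  have key : ∀ nn : ℕ, α + (nn:ℤ) • u ∈ D.Φ := by
    intro nn
    induction nn with
    | zero => simpa using hα
    | succ nn ih =>
      have h2 : pairZ (α + (nn:ℤ) • u) (D.coroot α) = 2 := by
        rw [pairZ_add_left, pairZ_zsmul_left, huα, D.root_coroot_two α hα]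
        ring
      have h3 : pairZ (α + (nn:ℤ) • u) (D.coroot β) = m := by
        rw [pairZ_add_left, pairZ_zsmul_left, huβ, ← hm]
        ring
      have hs1 := D.reflect_root_mem α hα _ ih
      rw [h2] at hs1
      have hs1β : pairZ (α + (nn:ℤ) • u - (2:ℤ) • α) (D.coroot β) = -m := by
        rw [pairZ_sub_left, pairZ_zsmul_left, h3, ← hm]
        ring
      have hs2 := D.reflect_root_mem β hβ _ hs1
      rw [hs1β] at hs2
      have hform : α + (nn:ℤ) • u - (2:ℤ) • α - (-m) • β = α + ((nn:ℤ)+1) • u := by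
        rw [hu]; module
      rw [hform] at hs2
      have : ((nn+1 : ℕ):ℤ) = (nn:ℤ) + 1 := by push_cast; ring
      rw [this]
      exact hs2
  have hu0 : u = 0 := by
    by_contra hu0
    obtain ⟨i, hi⟩ : ∃ i, u i ≠ 0 := by
      by_contra hall
      push_neg at hall
      exact hu0 (funext hall)
    have hinj : Function.Injective fun nn : ℕ => α + (nn:ℤ) • u := by
      intro a b hab
      have h := congrFun hab i
      simp only [Pi.add_apply, Pi.smul_apply, smul_eq_mul] at h
      have : (a:ℤ) * u i = (b:ℤ) * u i := by omega
      have := mul_right_cancel₀ hi this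
      omega
    exact Set.infinite_of_injective_forall_mem hinj
      (fun nn => Finset.mem_coe.mpr (key nn)) D.Φ.finite_toSet
  have hco : ∀ i, m * β i = 2 * α i := by
    intro i
    have h1 : u i = 0 := by rw [hu0]; rfl
    rw [hu] at h1
    simp only [Pi.sub_apply, Pi.smul_apply, smul_eq_mul] at h1
    omega
  have hm4 : m ≤ 4 := by
    have h4 : m * 1 ≤ m * m' := by
      apply mul_le_mul_of_nonneg_left hm'1 (by omega)
    rw [hmm'] at h4
    omega
  interval_cases m
  · -- m = 1 : β = 2α
    have hβ2 : β = (2:ℤ) • α := by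
      funext i
      have := hco i
      simp only [Pi.smul_apply, smul_eq_mul]
      omega
    rw [hβ2] at hβ
    rcases D.reduced α hα 2 hβ with h' | h' <;> omega
  · -- m = 2 : α = β
    funext i
    have := hco i
    omega
  · -- m = 3 : impossible
    omega
  · -- m = 4 : α = 2β
    have hα2 : α = (2:ℤ) • β := by
      funext i
      have := hco i
      simp only [Pi.smul_apply, smul_eq_mul]
      omega
    rw [hα2] at hα
    rcases D.reduced β hβ 2 hα with h' | h' <;> omega

lemma dot_mul (g h : G r) (v : Vr r) : D.dot (g * h) v = D.dot g (D.dot h v) := by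
  simp only [dot, AffineEquiv.coe_mul, Function.comp_apply]
  rw [sub_add_cancel]

lemma dot_one (v : Vr r) : D.dot 1 v = v := by
  simp only [dot, AffineEquiv.coe_one, id_eq]
  rw [add_sub_cancel_right]

lemma reg_dot_iff {g : G r} (hg : g ∈ D.Wp) : ∀ v, v ∈ D.Reg ↔ D.dot g v ∈ D.Reg := by
  refine Subgroup.closure_induction ?_ ?_ ?_ ?_ hg
  · rintro x (⟨α, hα, hx⟩ | ⟨α, hα, m, hx⟩)
    · -- reflection s_α
      have hαΦ := D.pos_sub hα
      have h2α : pairR (toV α) (D.coroot α) = (2:ℝ) := by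
        rw [pairR_toV, D.root_coroot_two α hαΦ]
        norm_num
      have hxv : ∀ u, x u = u - pairR u (D.coroot α) • toV α := by
        intro u
        have := hx u
        simpa using this
      have hinv : ∀ u, x (x u) = u := by
        intro u
        rw [hxv, hxv, pairR_sub_left, pairR_smul_left, h2α]
        module
      have hfor : ∀ v, v ∈ D.Reg → D.dot x v ∈ D.Reg := by
        intro v hv β hβ k hk
        have hxform : D.dot x v + toV D.ρ
            = (v + toV D.ρ) - pairR (v + toV D.ρ) (D.coroot α) • toV α := by
          simp only [dot]
          rw [sub_add_cancel, hxv]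
        rw [hxform, pairR_sub_left, pairR_smul_left, pairR_toV] at hk
        obtain ⟨δ, hδmem, hδeq⟩ := D.reflect_coroot_mem α hαΦ β (D.pos_sub hβ)
        have hδΦ : δ ∈ D.Φ := hδmem
        have hval : pairR (v + toV D.ρ) (D.coroot δ) = (k:ℝ) * D.p := by
          rw [hδeq, pairR_sub_zsmul_right]
          linarith [hk]
        rcases D.pos_or_neg δ hδΦ with hp | hn
        · exact hv δ hp k hval
        · have hcn : D.coroot δ = - D.coroot (-δ) := by
            have := D.coroot_neg (D.neg_mem δ hδΦ)
            rwa [neg_neg] at this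
          apply hv (-δ) hn (-k)
          rw [hcn, pairR_neg_right] at hval
          push_cast
          linarith
      intro v
      constructor
      · exact hfor v
      · intro hxv'
        have hdd : D.dot x (D.dot x v) = v := by
          simp only [dot]
          rw [sub_add_cancel, hinv, add_sub_cancel_right]
        have := hfor _ hxv'
        rwa [hdd] at this
    · -- translation t_{α,m}
      intro v
      have hform : ∀ β, pairR (D.dot x v + toV D.ρ) (D.coroot β)
          = pairR (v + toV D.ρ) (D.coroot β) + (m:ℝ) * D.p * (pairZ α (D.coroot β) : ℝ) := by
        intro β
        have : D.dot x v + toV D.ρ = (v + toV D.ρ) + ((m:ℝ) * D.p) • toV α := by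
          simp only [dot]
          rw [sub_add_cancel, hx]
        rw [this, pairR_add_left, pairR_smul_left, pairR_toV]
      constructor
      · intro hv β hβ k hk
        rw [hform] at hk
        apply hv β hβ (k - m * pairZ α (D.coroot β))
        push_cast
        linarith
      · intro hv β hβ k hk
        apply hv β hβ (k + m * pairZ α (D.coroot β))
        rw [hform, hk]
        push_cast
        ring
  · intro v
    rw [D.dot_one]
  · intro x y _ _ Px Py v
    rw [D.dot_mul]
    exact (Py v).trans (Px _)
  · intro x _ Px v
    have hxx : D.dot x (D.dot x⁻¹ v) = v := by
      rw [← D.dot_mul, mul_inv_cancel, D.dot_one]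
    constructor
    · intro hv
      exact (Px _).mpr (by rwa [hxx])
    · intro hv
      have := (Px _).mp hv
      rwa [hxx] at this

end ARDatum

end StmtAux

/-- If `w·λ ∈ C_I ∩ X₊` and `d(w·λ) > 0`, then there is `β ∈ Φ⁺ ∖ ℤI` with
`n_β(w·λ) ≠ 0` whose hyperplane `H_{β,n_β(w·λ)}` contains a wall of the alcove
containing `w·λ`. -/
theorem stmt12 {r : ℕ} (D : ARDatum r)
    (I : Finset (Lr r)) (hI : I ⊆ D.simples)
    (lam : Lr r) (hlam : toV lam ∈ D.FundC)
    (hlamstab : ∀ g ∈ D.Wp, D.dot g (toV lam) = toV lam → g = 1)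
    (w : ARDatum.G r) (hw : w ∈ D.Wp)
    (h1 : D.dot w (toV lam) ∈ D.CI I) (h2 : D.dot w (toV lam) ∈ D.XplusR)
    (h3 : 0 < D.dfn (D.dot w (toV lam))) :
    ∃ β ∈ D.pos, β ∉ ZI I ∧ D.nfl (D.dot w (toV lam)) β ≠ 0 ∧
      D.HasWall (D.alcoveOf (D.dot w (toV lam))) β (D.nfl (D.dot w (toV lam)) β) := by
  classical
  have hp0 : (0:ℝ) < (D.p : ℝ) := by exact_mod_cast D.hp.pos
  set μ : Vr r := D.dot w (toV lam) with hμdef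
  -- λ is regular
  have hlamreg : toV lam ∈ D.Reg := by
    intro α hα k hk
    obtain ⟨h01, h02⟩ := hlam α hα
    rw [hk] at h01 h02
    rcases le_or_gt k 0 with hk0 | hk0
    · have hk0' : (k:ℝ) ≤ 0 := by exact_mod_cast hk0
      nlinarith
    · have h1k : (1:ℝ) ≤ (k:ℝ) := by exact_mod_cast hk0
      nlinarith
  have hμreg : μ ∈ D.Reg := (D.reg_dot_iff hw (toV lam)).mp hlamreg
  set n : Lr r → ℤ := fun α => D.nfl μ α with hndef
  have hnfl : ∀ α, n α = ⌊pairR (μ + toV D.ρ) (D.coroot α) / (D.p:ℝ)⌋ := fun α => rfl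
  have hbound : ∀ α ∈ D.pos, (n α : ℝ) * D.p < pairR (μ + toV D.ρ) (D.coroot α) ∧
      pairR (μ + toV D.ρ) (D.coroot α) < ((n α : ℝ) + 1) * D.p := by
    intro α hα
    have hle : ((n α : ℤ) : ℝ) ≤ pairR (μ + toV D.ρ) (D.coroot α) / D.p := by
      rw [hnfl α]; exact Int.floor_le _
    have hlt : pairR (μ + toV D.ρ) (D.coroot α) / D.p < (n α : ℝ) + 1 := by
      rw [hnfl α]
      have := Int.lt_floor_add_one (pairR (μ + toV D.ρ) (D.coroot α) / (D.p:ℝ))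
      exact_mod_cast this
    constructor
    · have h1 : (n α:ℝ) * D.p ≤ pairR (μ + toV D.ρ) (D.coroot α) := (le_div_iff₀ hp0).mp hle
      rcases h1.lt_or_eq with h | h
      · exact h
      · exact absurd h.symm (hμreg α hα (n α))
    · exact (div_lt_iff₀ hp0).mp hlt
  have hnn : ∀ α ∈ D.pos, 0 ≤ n α := by
    intro α hα
    have h0 := h2.2 α hα
    rw [hnfl α]
    exact Int.floor_nonneg.mpr (div_nonneg h0 hp0.le)
  -- some positive root has n ≥ 1
  set S : Finset (Lr r) := D.pos.filter (fun α => 1 ≤ n α) with hSdef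
  have hSne' : S.Nonempty := by
    by_contra hcon
    rw [Finset.not_nonempty_iff_eq_empty] at hcon
    have hall : ∀ α ∈ D.pos, n α = 0 := by
      intro α hα
      by_contra h0
      have h1' : 1 ≤ n α := by have := hnn α hα; omega
      have : α ∈ S := Finset.mem_filter.mpr ⟨hα, h1'⟩
      rw [hcon] at this
      exact absurd this (Finset.notMem_empty α)
    have hzero : D.dfn μ = 0 := Finset.sum_eq_zero hall
    rw [hzero] at h3
    exact absurd h3 (lt_irrefl 0)
  -- avoidance of ties
  set Aco : Lr r → ℝ := fun α => pairR (μ + toV D.ρ) (D.coroot α) - (n α : ℝ) * D.p with hAco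
  have hApos : ∀ α ∈ S, 0 < Aco α := by
    intro α hα
    obtain ⟨hα1, _⟩ := Finset.mem_filter.mp hα
    have := (hbound α hα1).1
    simp only [hAco]
    linarith
  set wgt : Lr r × Lr r → Vr r := fun q => fun j =>
    Aco q.2 * (D.coroot q.1 j : ℝ) - Aco q.1 * (D.coroot q.2 j : ℝ) with hwgt
  set ev : Lr r × Lr r → ℝ := fun q =>
    Aco q.1 * (pairR (μ + toV D.ρ) (D.coroot q.2) - pairR (toV D.ρ) (D.coroot q.2))
    - Aco q.2 * (pairR (μ + toV D.ρ) (D.coroot q.1) - pairR (toV D.ρ) (D.coroot q.1)) with hev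
  set fs : Finset (Lr r × Lr r) := (S ×ˢ S).filter (fun q => q.1 ≠ q.2) with hfs
  have hGform : ∀ (q : Lr r × Lr r) (c' : Vr r),
      (∑ j, c' j * wgt q j) + ev q
      = Aco q.1 * (pairR (μ + toV D.ρ) (D.coroot q.2) - pairR (c' + toV D.ρ) (D.coroot q.2))
        - Aco q.2 * (pairR (μ + toV D.ρ) (D.coroot q.1) - pairR (c' + toV D.ρ) (D.coroot q.1)) := by
    intro q c'
    have hsum : (∑ j, c' j * wgt q j)
        = Aco q.2 * pairR c' (D.coroot q.1) - Aco q.1 * pairR c' (D.coroot q.2) := by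
      simp only [hwgt, pairR]
      rw [Finset.mul_sum, Finset.mul_sum, ← Finset.sum_sub_distrib]
      exact Finset.sum_congr rfl fun j _ => by ring
    rw [hsum, pairR_add_left c' (toV D.ρ) (D.coroot q.2), pairR_add_left c' (toV D.ρ) (D.coroot q.1)]
    simp only [hev]
    ring
  have hwnz : ∀ q ∈ fs, wgt q ≠ 0 := by
    intro q hq hq0
    obtain ⟨hqmem, hqne⟩ := Finset.mem_filter.mp hq
    obtain ⟨hq1, hq2⟩ := Finset.mem_product.mp hqmem
    have hA1 := hApos q.1 hq1
    have hA2 := hApos q.2 hq2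
    have h12 : q.1 = q.2 := by
      apply D.root_eq_of_prop (D.pos_sub (Finset.mem_filter.mp hq1).1)
        (D.pos_sub (Finset.mem_filter.mp hq2).1) hA1 hA2
      intro i
      have hzz := congrFun hq0 i
      simp only [hwgt, Pi.zero_apply] at hzz
      linarith
    exact hqne h12
  have hCopen : IsOpen D.FundC := by
    have heqC : D.FundC = ⋂ α ∈ D.pos,
        ({v : Vr r | 0 < pairR (v + toV D.ρ) (D.coroot α)} ∩
         {v : Vr r | pairR (v + toV D.ρ) (D.coroot α) < (D.p:ℝ)}) := by
      ext v
      simp only [ARDatum.FundC, Set.mem_setOf_eq, Set.mem_iInter, Set.mem_inter_iff]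
    rw [heqC]
    exact isOpen_biInter_finset fun α _ =>
      (isOpen_lt continuous_const (continuous_pairR_add _ _)).inter
        (isOpen_lt (continuous_pairR_add _ _) continuous_const)
  obtain ⟨c, hcC, hcavoid⟩ := exists_avoid fs wgt ev hwnz D.FundC hCopen ⟨toV lam, hlam⟩
  have hcpos : ∀ α ∈ D.pos, 0 < pairR (c + toV D.ρ) (D.coroot α) ∧
      pairR (c + toV D.ρ) (D.coroot α) < D.p := hcC
  have hGne : ∀ q ∈ fs,
      Aco q.1 * (pairR (μ + toV D.ρ) (D.coroot q.2) - pairR (c + toV D.ρ) (D.coroot q.2))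
      ≠ Aco q.2 * (pairR (μ + toV D.ρ) (D.coroot q.1) - pairR (c + toV D.ρ) (D.coroot q.1)) := by
    intro q hq heq
    apply hcavoid q hq
    rw [hGform q c]
    linarith
  -- the segment data
  set Δ : Lr r → ℝ := fun γ =>
    pairR (μ + toV D.ρ) (D.coroot γ) - pairR (c + toV D.ρ) (D.coroot γ) with hΔ
  have hΔpos : ∀ γ ∈ S, 0 < Δ γ := by
    intro γ hγ
    obtain ⟨hγp, hγ1⟩ := Finset.mem_filter.mp hγ
    have hb1 := (hbound γ hγp).1
    have hc2 := (hcpos γ hγp).2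
    have h1n : (1:ℝ) ≤ (n γ:ℝ) := by exact_mod_cast hγ1
    have hple : (D.p:ℝ) ≤ (n γ:ℝ) * D.p := by nlinarith
    simp only [hΔ]
    linarith
  set tt : Lr r → ℝ := fun γ => Aco γ / Δ γ with htt
  obtain ⟨β, hβS, hβmin⟩ := Finset.exists_min_image S tt hSne'
  obtain ⟨hβpos, hβ1⟩ := Finset.mem_filter.mp hβS
  set T : ℝ := tt β with hTdef
  have hT0 : 0 < T := div_pos (hApos β hβS) (hΔpos β hβS)
  have hT1 : T < 1 := by
    rw [hTdef, htt]
    rw [div_lt_one (hΔpos β hβS)]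
    have hc2 := (hcpos β hβpos).2
    have h1n : (1:ℝ) ≤ (n β:ℝ) := by exact_mod_cast hβ1
    have hple : (D.p:ℝ) ≤ (n β:ℝ) * D.p := by nlinarith
    simp only [hAco, hΔ]
    linarith
  have httval : ∀ γ ∈ S, tt γ * Δ γ = Aco γ := fun γ hγ => div_mul_cancel₀ _ (hΔpos γ hγ).ne'
  set x₀ : Vr r := μ + T • (c - μ) with hx₀def
  -- the open box B'
  set B' : Set (Vr r) := {z | ∀ α ∈ D.pos,
      (n α : ℝ) * D.p < pairR (z + toV D.ρ) (D.coroot α) ∧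
      pairR (z + toV D.ρ) (D.coroot α) < ((n α:ℝ) + 1) * D.p} with hB'def
  have hμB' : μ ∈ B' := fun α hα => hbound α hα
  have hB'sub : B' ⊆ D.Reg := by
    intro z hz α hα k hk
    obtain ⟨hl, hr⟩ := hz α hα
    rw [hk] at hl hr
    have hlt1 : (n α:ℝ) < (k:ℝ) := (mul_lt_mul_iff_left₀ hp0).mp hl
    have hlt2 : (k:ℝ) < (n α:ℝ) + 1 := by
      have := (mul_lt_mul_iff_left₀ hp0).mp hr
      linarith
    have h1' : n α < k := by exact_mod_cast hlt1
    have h2' : (k:ℝ) < ((n α + 1 : ℤ):ℝ) := by push_cast; linarith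
    have h2'' : k < n α + 1 := by exact_mod_cast h2'
    omega
  have hB'open : IsOpen B' := by
    have heqB : B' = ⋂ α ∈ D.pos,
        ({z : Vr r | (n α:ℝ) * D.p < pairR (z + toV D.ρ) (D.coroot α)} ∩
         {z : Vr r | pairR (z + toV D.ρ) (D.coroot α) < ((n α:ℝ) + 1) * D.p}) := by
      ext z
      simp only [hB'def, Set.mem_setOf_eq, Set.mem_iInter, Set.mem_inter_iff]
    rw [heqB]
    exact isOpen_biInter_finset fun α _ =>
      (isOpen_lt continuous_const (continuous_pairR_add _ _)).inter
        (isOpen_lt (continuous_pairR_add _ _) continuous_const)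
  have hB'convex : Convex ℝ B' := by
    intro z1 hz1 z2 hz2 a b ha hb hab
    intro α hα
    obtain ⟨h11, h12⟩ := hz1 α hα
    obtain ⟨h21, h22⟩ := hz2 α hα
    have haeq : a = 1 - b := by linarith
    have hzeq : a • z1 + b • z2 = z1 + b • (z2 - z1) := by
      funext i
      simp only [Pi.add_apply, Pi.smul_apply, Pi.sub_apply, smul_eq_mul]
      rw [haeq]; ring
    have hcomb : pairR ((a • z1 + b • z2) + toV D.ρ) (D.coroot α)
        = pairR (z1 + toV D.ρ) (D.coroot α)
          - b * (pairR (z1 + toV D.ρ) (D.coroot α) - pairR (z2 + toV D.ρ) (D.coroot α)) := by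
      rw [hzeq]
      exact pairR_line z1 z2 (toV D.ρ) b (D.coroot α)
    rw [hcomb]
    have hb1 : b ≤ 1 := by linarith
    exact ⟨comb_lt h11 h21 hb hb1, comb_gt h12 h22 hb hb1⟩
  have hB'alc : B' ⊆ D.alcoveOf μ :=
    hB'convex.isPreconnected.subset_connectedComponentIn hμB' hB'sub
  -- the segment lies in B'
  have hseg : ∀ t : ℝ, 0 ≤ t → t < T → μ + t • (c - μ) ∈ B' := by
    intro t ht0 htT α hα
    rw [pairR_line]
    rcases (hnn α hα).lt_or_eq with hn1 | hn0
    · have hαS : α ∈ S := Finset.mem_filter.mpr ⟨hα, by omega⟩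
      have hΔα := hΔpos α hαS
      have httα : T ≤ tt α := hβmin α hαS
      have htlt : t < tt α := lt_of_lt_of_le htT httα
      constructor
      · have hmul : t * Δ α < tt α * Δ α := mul_lt_mul_of_pos_right htlt hΔα
        rw [httval α hαS] at hmul
        simp only [hAco, hΔ] at hmul
        linarith
      · have hmul : 0 ≤ t * Δ α := mul_nonneg ht0 hΔα.le
        have hb2 := (hbound α hα).2
        simp only [hΔ] at hmul
        linarith
    · have h01 := hbound α hα
      have h02 := hcpos α hα
      rw [← hn0] at h01 ⊢
      push_cast at h01 ⊢
      simp only [zero_mul] at h01 ⊢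
      rw [zero_add, one_mul] at h01 ⊢
      have ht1 : t ≤ 1 := le_of_lt (htT.trans hT1)
      exact ⟨comb_lt h01.1 h02.1 ht0 ht1, comb_gt h01.2 h02.2 ht0 ht1⟩
  -- x₀ is in the closure of B'
  have hx₀cl : x₀ ∈ closure B' := by
    apply mem_closure_of_ray (μ - x₀)
    intro s hs0 hs1
    have hform : x₀ + s • (μ - x₀) = μ + ((1 - s) * T) • (c - μ) := by
      rw [hx₀def]
      funext i
      simp only [Pi.add_apply, Pi.smul_apply, Pi.sub_apply, smul_eq_mul]
      ring
    rw [hform]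
    apply hseg
    · have h1s : (0:ℝ) ≤ 1 - s := by linarith
      exact mul_nonneg h1s hT0.le
    · nlinarith
  have hx₀val : ∀ γ : Lr r, pairR (x₀ + toV D.ρ) (D.coroot γ)
      = pairR (μ + toV D.ρ) (D.coroot γ) - T * Δ γ := by
    intro γ
    rw [hx₀def, pairR_line μ c (toV D.ρ) T (D.coroot γ)]
  have hx₀β : pairR (x₀ + toV D.ρ) (D.coroot β) = (n β:ℝ) * D.p := by
    rw [hx₀val]
    have hv := httval β hβS
    rw [← hTdef] at hv
    simp only [hAco] at hv
    linarith
  -- band bounds at x₀ for α ≠ β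
  have hband : ∀ α ∈ D.pos, α ≠ β →
      (n α:ℝ) * D.p < pairR (x₀ + toV D.ρ) (D.coroot α) ∧
      pairR (x₀ + toV D.ρ) (D.coroot α) < ((n α:ℝ) + 1) * D.p := by
    intro α hα hne
    rw [hx₀val]
    rcases (hnn α hα).lt_or_eq with hn1 | hn0
    · have hαS : α ∈ S := Finset.mem_filter.mpr ⟨hα, by omega⟩
      have hΔα := hΔpos α hαS
      have httα : T ≤ tt α := hβmin α hαS
      have hTne : T ≠ tt α := by
        intro hTeq
        have hqfs : (β, α) ∈ fs :=
          Finset.mem_filter.mpr ⟨Finset.mem_product.mpr ⟨hβS, hαS⟩, by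
            simp only []
            exact fun hh => hne (by rw [hh])⟩
        apply hGne (β, α) hqfs
        have e1 : T * Δ β = Aco β := by rw [hTdef]; exact httval β hβS
        have e2 : T * Δ α = Aco α := by rw [hTeq]; exact httval α hαS
        simp only [hΔ, hAco] at e1 e2
        simp only [hAco]
        linear_combination (pairR (μ + toV D.ρ) (D.coroot β) - pairR (c + toV D.ρ) (D.coroot β)) * e2
          - (pairR (μ + toV D.ρ) (D.coroot α) - pairR (c + toV D.ρ) (D.coroot α)) * e1
      have hTlt : T < tt α := lt_of_le_of_ne httα hTne
      constructor
      · have hmul : T * Δ α < tt α * Δ α := mul_lt_mul_of_pos_right hTlt hΔα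
        rw [httval α hαS] at hmul
        simp only [hAco] at hmul
        linarith
      · have hmul : 0 < T * Δ α := mul_pos hT0 hΔα
        have hb2 := (hbound α hα).2
        linarith
    · have h01 := hbound α hα
      have h02 := hcpos α hα
      rw [← hn0] at h01 ⊢
      push_cast at h01 ⊢
      simp only [zero_mul] at h01 ⊢
      rw [zero_add, one_mul] at h01 ⊢
      exact ⟨comb_lt h01.1 h02.1 hT0.le hT1.le, comb_gt h01.2 h02.2 hT0.le hT1.le⟩
  -- epsilon data
  set A' : Finset (Lr r) := D.pos.erase β with hA'def
  set δf : Lr r → ℝ := fun α =>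
    min (pairR (x₀ + toV D.ρ) (D.coroot α) - (n α:ℝ) * D.p)
        (((n α:ℝ) + 1) * D.p - pairR (x₀ + toV D.ρ) (D.coroot α)) with hδf
  have hδpos : ∀ α ∈ A', 0 < δf α := by
    intro α hα'
    obtain ⟨hne, hα⟩ := Finset.mem_erase.mp hα'
    obtain ⟨hb1, hb2⟩ := hband α hα hne
    simp only [hδf]
    exact lt_min (by linarith) (by linarith)
  set Kf : Lr r → ℝ := fun α => ∑ j, |(D.coroot α j : ℝ)| with hKf
  have hK0 : ∀ α, 0 ≤ Kf α := fun α => Finset.sum_nonneg fun j _ => abs_nonneg _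
  obtain ⟨ε, hε0, hεle⟩ := finset_exists_pos A' (fun α => δf α / (2 * (Kf α + 1)))
    (fun α hα => div_pos (hδpos α hα) (by have := hK0 α; linarith))
  obtain ⟨s₁, hs₁0, hs₁le⟩ := finset_exists_pos A' (fun α => δf α / (2 * (|Δ α| + 1)))
    (fun α hα => div_pos (hδpos α hα) (by have := abs_nonneg (Δ α); linarith))
  have hΔβ : 0 < Δ β := hΔpos β hβS
  set s₀ : ℝ := min s₁ ((D.p:ℝ) / (Δ β + 1)) with hs₀def
  have hs₀0 : 0 < s₀ := lt_min hs₁0 (div_pos hp0 (by linarith))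
  -- Lipschitz bound
  have hlip : ∀ (γ : Lr r) (y z : Vr r),
      |pairR (y + toV D.ρ) (D.coroot γ) - pairR (z + toV D.ρ) (D.coroot γ)| ≤ Kf γ * dist y z := by
    intro γ y z
    have heq : pairR (y + toV D.ρ) (D.coroot γ) - pairR (z + toV D.ρ) (D.coroot γ)
        = ∑ j, (y j - z j) * (D.coroot γ j : ℝ) := by
      simp only [pairR, Pi.add_apply]
      rw [← Finset.sum_sub_distrib]
      exact Finset.sum_congr rfl fun j _ => by ring
    rw [heq]
    calc |∑ j, (y j - z j) * (D.coroot γ j:ℝ)|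
        ≤ ∑ j, |(y j - z j) * (D.coroot γ j:ℝ)| := Finset.abs_sum_le_sum_abs _ _
      _ ≤ ∑ j, dist y z * |(D.coroot γ j:ℝ)| := by
          apply Finset.sum_le_sum
          intro j _
          rw [abs_mul]
          apply mul_le_mul_of_nonneg_right _ (abs_nonneg _)
          rw [← Real.dist_eq]
          exact dist_le_pi_dist y z j
      _ = Kf γ * dist y z := by
          rw [← Finset.mul_sum, mul_comm]
  -- conclusion
  refine ⟨β, hβpos, ?_, ?_, ?_⟩
  · intro hβZI
    obtain ⟨hc1, hc2⟩ := h1 β hβpos hβZI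
    have hb1 := (hbound β hβpos).1
    have h1n : (1:ℝ) ≤ (n β:ℝ) := by exact_mod_cast hβ1
    nlinarith
  · show n β ≠ 0
    omega
  · refine ⟨x₀, ⟨(closure_mono hB'alc) hx₀cl, hx₀β⟩, ε, hε0, ?_⟩
    intro y hy hydist
    apply (closure_mono hB'alc)
    apply mem_closure_of_ray (s₀ • (μ - c))
    intro s hs0 hs1
    rw [smul_smul]
    have ht0 : 0 < s * s₀ := mul_pos hs0 hs₀0
    have hts : s * s₀ ≤ s₀ := by nlinarith
    intro α hα
    have hval : pairR ((y + (s * s₀) • (μ - c)) + toV D.ρ) (D.coroot α)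
        = pairR (y + toV D.ρ) (D.coroot α) + (s * s₀) * Δ α := by
      rw [pairR_shift, pairR_sub_left]
      simp only [hΔ, pairR_add_left]
      ring
    rw [hval]
    by_cases hαβ : α = β
    · subst hαβ
      have hyv : pairR (y + toV D.ρ) (D.coroot α) = (n α:ℝ) * D.p := hy
      have hs₀Δ : s₀ * Δ α < (D.p:ℝ) := by
        have h1 : s₀ ≤ (D.p:ℝ) / (Δ α + 1) := min_le_right _ _
        have h2 : s₀ * Δ α ≤ ((D.p:ℝ) / (Δ α + 1)) * Δ α :=
          mul_le_mul_of_nonneg_right h1 hΔβ.le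
        have h3 : ((D.p:ℝ) / (Δ α + 1)) * Δ α < (D.p:ℝ) := by
          rw [div_mul_eq_mul_div, div_lt_iff₀ (by linarith)]
          nlinarith
        exact lt_of_le_of_lt h2 h3
      have htsΔ : (s * s₀) * Δ α ≤ s₀ * Δ α := mul_le_mul_of_nonneg_right hts hΔβ.le
      have htsΔ0 : 0 < (s * s₀) * Δ α := mul_pos ht0 hΔβ
      rw [hyv]
      constructor
      · linarith
      · nlinarith
    · have hαA' : α ∈ A' := Finset.mem_erase.mpr ⟨hαβ, hα⟩
      obtain ⟨hxb1, hxb2⟩ := hband α hα hαβ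
      have hδα := hδpos α hαA'
      have h1' : |pairR (y + toV D.ρ) (D.coroot α) - pairR (x₀ + toV D.ρ) (D.coroot α)|
          < δf α / 2 := by
        have hdist := hlip α y x₀
        have hKd : Kf α * dist y x₀ ≤ Kf α * ε := mul_le_mul_of_nonneg_left hydist.le (hK0 α)
        have hεα := hεle α hαA'
        have hKe : Kf α * ε ≤ Kf α * (δf α / (2 * (Kf α + 1))) :=
          mul_le_mul_of_nonneg_left hεα (hK0 α)
        have hlast : Kf α * (δf α / (2 * (Kf α + 1))) < δf α / 2 :=
          div_bound_helper (hK0 α) hδα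
        linarith
      have h2' : (s * s₀) * |Δ α| < δf α / 2 := by
        have hs₁α := hs₁le α hαA'
        have hle2 : s * s₀ ≤ δf α / (2 * (|Δ α| + 1)) :=
          le_trans (hts.trans (min_le_left _ _)) hs₁α
        have habs : (0:ℝ) ≤ |Δ α| := abs_nonneg _
        calc (s * s₀) * |Δ α| ≤ (δf α / (2 * (|Δ α| + 1))) * |Δ α| :=
              mul_le_mul_of_nonneg_right hle2 habs
          _ < δf α / 2 := by
              rw [mul_comm]
              exact div_bound_helper habs hδα
      have h3' : |pairR (y + toV D.ρ) (D.coroot α) + (s * s₀) * Δ α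
          - pairR (x₀ + toV D.ρ) (D.coroot α)| < δf α := by
        have hsplit : pairR (y + toV D.ρ) (D.coroot α) + (s * s₀) * Δ α
            - pairR (x₀ + toV D.ρ) (D.coroot α)
            = (pairR (y + toV D.ρ) (D.coroot α) - pairR (x₀ + toV D.ρ) (D.coroot α))
              + (s * s₀) * Δ α := by ring
        rw [hsplit]
        have habs2 : |(s * s₀) * Δ α| = (s * s₀) * |Δ α| := by
          rw [abs_mul, abs_of_pos ht0]
        calc |(pairR (y + toV D.ρ) (D.coroot α) - pairR (x₀ + toV D.ρ) (D.coroot α))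
              + (s * s₀) * Δ α|
            ≤ |pairR (y + toV D.ρ) (D.coroot α) - pairR (x₀ + toV D.ρ) (D.coroot α)|
              + |(s * s₀) * Δ α| := abs_add_le _ _
          _ < δf α := by rw [habs2]; linarith
      have hδ1 : δf α ≤ pairR (x₀ + toV D.ρ) (D.coroot α) - (n α:ℝ) * D.p := min_le_left _ _
      have hδ2 : δf α ≤ ((n α:ℝ) + 1) * D.p - pairR (x₀ + toV D.ρ) (D.coroot α) := min_le_right _ _
      obtain ⟨ha1, ha2⟩ := abs_lt.mp h3'
      constructor
      · linarith
      · linarith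


end
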